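/- Let G be a graph on vertex set [n] whose edge set contains the edges of a Hamiltonian cycle C. Fix a vertex v. Define N_0 = {v}, and for ℓ ≥ 1, N_ℓ = the set of vertices at graph distance exactly ℓ from v in G that are not adjacent in C to any vertex at distance ≤ ℓ-1 from v. Then for every ℓ ≥ 1, the ball B_G(v,ℓ) = {w : d_G(v,w) ≤ ℓ} is contained in the union over j = 0,...,ℓ of the sets of vertices within C-distance ℓ-j of N_j. -/
import Mathlib


/-- If `G` contains a Hamiltonian cycle `C`, `N 0 = {v}` and
`N ℓ = {w : d_G(v,w) = ℓ, w not C-adjacent to B_G(v,ℓ-1)}`, then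
`B_G(v,ℓ) ⊆ ⋃_{j=0}^{ℓ} B_C(N j, ℓ - j)` for all `ℓ ≥ 1`. -/
theorem stmt3 {V : Type*} [Fintype V] [DecidableEq V]
    (G C : SimpleGraph V) (hCG : C ≤ G)
    (hHam : ∃ (v₀ : V) (p : C.Walk v₀ v₀), p.IsHamiltonianCycle)
    (v : V) (N : ℕ → Set V) (hN0 : N 0 = {v})
    (hN : ∀ ℓ : ℕ, 1 ≤ ℓ →
      N ℓ = {w | G.dist v w = ℓ ∧ ∀ u, G.dist v u ≤ ℓ - 1 → ¬ C.Adj w u}) :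
    ∀ ℓ : ℕ, 1 ≤ ℓ →
      {w | G.dist v w ≤ ℓ} ⊆
        ⋃ j ∈ Finset.range (ℓ + 1), {w | ∃ u ∈ N j, C.dist u w ≤ ℓ - j} := by
  obtain ⟨v₀, p, hp⟩ := hHam
  have hCconn : C.Connected := by
    rw [SimpleGraph.connected_iff_exists_forall_reachable]
    exact ⟨v₀, fun w => SimpleGraph.Walk.reachable
      ((p.takeUntil w (hp.mem_support w)))⟩
  have hGconn : G.Connected := hCconn.mono hCG
  have key : ∀ ℓ : ℕ, ∀ w, G.dist v w ≤ ℓ →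
      ∃ j ≤ ℓ, ∃ u ∈ N j, C.dist u w ≤ ℓ - j := by
    intro ℓ
    induction ℓ with
    | zero =>
      intro w hw
      have : w = v := (hGconn.dist_eq_zero_iff.mp (Nat.le_zero.mp hw)).symm
      subst this
      exact ⟨0, le_refl 0, w, by simp [hN0], by simp⟩
    | succ ℓ ih =>
      intro w hw
      by_cases hle : G.dist v w ≤ ℓ
      · obtain ⟨j, hj, u, hu, hd⟩ := ih w hle
        exact ⟨j, hj.trans (Nat.le_succ ℓ), u, hu, hd.trans (by omega)⟩
      · have hd : G.dist v w = ℓ + 1 := by omega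
        by_cases hwN : w ∈ N (ℓ + 1)
        · exact ⟨ℓ + 1, le_refl _, w, hwN, by simp⟩
        · rw [hN (ℓ + 1) (by omega)] at hwN
          simp only [Set.mem_setOf_eq, not_and, not_forall] at hwN
          obtain ⟨u, hu, hadj⟩ := hwN hd
          rw [not_not] at hadj
          simp only [Nat.add_sub_cancel] at hu
          obtain ⟨j, hj, u', hu', hdu⟩ := ih u hu
          refine ⟨j, hj.trans (Nat.le_succ ℓ), u', hu', ?_⟩
          have htri := hCconn.dist_triangle (u := u') (v := u) (w := w)
          have h1 : C.dist u w = 1 := by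
            rw [SimpleGraph.dist_eq_one_iff_adj]
            exact hadj.symm
          omega
  intro ℓ hℓ w hw
  obtain ⟨j, hj, u, hu, hd⟩ := key ℓ w hw
  simp only [Set.mem_iUnion, Finset.mem_range, Set.mem_setOf_eq]
  exact ⟨j, by omega, u, hu, hd⟩
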